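/- Let G ∈ ℝ^{N×N} be symmetric positive definite with smallest eigenvalue λ₀ > 0, let B₁,…,B_E be pairwise disjoint subsets of {1,…,N} whose union is {1,…,N} with corresponding diagonal 0/1 projectors P_{B_z}, and let b > 0. Then there exists η₀ > 0 such that for all 0 < η < η₀, the one-epoch product satisfies ‖ Π_{z=E}^{1} ( I − (η/b) G P_{B_z} ) ‖_op ≤ 1 − (η/(2b)) λ₀ < 1. -/

import Mathlib

open Matrix
open scoped RealInnerProductSpace

/-- The ℓ²-operator (spectral) norm of a square real matrix. -/
noncomputable def l2OpNorm {n : ℕ} (M : Matrix (Fin n) (Fin n) ℝ) : ℝ :=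
  ‖Matrix.toEuclideanCLM (𝕜 := ℝ) M‖

/-- The diagonal 0/1 projector `P_B` onto the coordinates of the batch `B`. -/
def batchProj {N : ℕ} (B : Finset (Fin N)) : Matrix (Fin N) (Fin N) ℝ :=
  Matrix.diagonal fun i => if i ∈ B then 1 else 0

/-- First-order expansion with uniformly bounded second-order remainder for a product
of perturbations of the identity in a normed algebra. -/
lemma epoch_expand {R : Type*} [NormedRing R] [NormedAlgebra ℝ R] (L : List R) :
    ∃ C : ℝ, 0 ≤ C ∧ ∀ t : ℝ, |t| ≤ 1 → ∃ S : R,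
      (L.map (fun A => 1 - t • A)).prod = 1 - t • L.sum + t ^ 2 • S ∧ ‖S‖ ≤ C := by
  induction L with
  | nil =>
    exact ⟨0, le_refl _, fun t _ => ⟨0, by simp, by simp⟩⟩
  | cons A L ih =>
    obtain ⟨C, hC0, hC⟩ := ih
    refine ⟨C + ‖A‖ * ‖L.sum‖ + ‖A‖ * C, by positivity, fun t ht => ?_⟩
    obtain ⟨S, hS, hSC⟩ := hC t ht
    refine ⟨S + A * L.sum - t • (A * S), ?_, ?_⟩
    · simp only [List.map_cons, List.prod_cons, hS, List.sum_cons]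
      simp only [mul_sub, mul_add, sub_mul, smul_mul_assoc, mul_smul_comm, smul_smul,
        mul_one, one_mul, smul_sub, smul_add]
      module
    · calc ‖S + A * L.sum - t • (A * S)‖
          ≤ ‖S + A * L.sum‖ + ‖t • (A * S)‖ := norm_sub_le _ _
        _ ≤ ‖S‖ + ‖A * L.sum‖ + |t| * ‖A * S‖ := by
            rw [norm_smul, Real.norm_eq_abs]
            exact add_le_add (norm_add_le _ _) le_rfl
        _ ≤ C + ‖A‖ * ‖L.sum‖ + ‖A‖ * C := by
            have h1 : ‖A * L.sum‖ ≤ ‖A‖ * ‖L.sum‖ := norm_mul_le _ _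
            have h2 : ‖A * S‖ ≤ ‖A‖ * ‖S‖ := norm_mul_le _ _
            have h3 : |t| * ‖A * S‖ ≤ 1 * (‖A‖ * ‖S‖) :=
              mul_le_mul ht h2 (norm_nonneg _) zero_le_one
            nlinarith [norm_nonneg A]

/-- Disjoint batches covering all the coordinates have projectors summing to the identity. -/
lemma batchProj_sum {N E : ℕ} (B : Fin E → Finset (Fin N))
    (hdisj : ∀ i j, i ≠ j → Disjoint (B i) (B j))
    (hcover : ∀ x : Fin N, ∃ i, x ∈ B i) :
    ∑ z : Fin E, batchProj (B z) = 1 := by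
  ext i j
  simp only [Matrix.sum_apply, batchProj, Matrix.diagonal_apply, Matrix.one_apply]
  by_cases hij : i = j
  · subst hij
    simp only [if_pos rfl]
    obtain ⟨z₀, hz₀⟩ := hcover i
    rw [Finset.sum_eq_single_of_mem z₀ (Finset.mem_univ _)]
    · simp [hz₀]
    · intro z _ hz
      have : i ∉ B z := fun hmem => Finset.disjoint_left.mp (hdisj z z₀ hz) hmem hz₀
      simp [this]
  · simp [hij]

/-- Spectral bound: if all eigenvalues of the Hermitian matrix `G` are at least `lam0`,
then `‖1 - s • G‖ ≤ 1 - s * lam0` for suitable `s ≥ 0`. -/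
lemma spectral_bound {N : ℕ} (G : Matrix (Fin N) (Fin N) ℝ) (hH : G.IsHermitian)
    (lam0 : ℝ) (hmin : ∀ i, lam0 ≤ hH.eigenvalues i) (s : ℝ) (hs : 0 ≤ s)
    (hsT : s * ‖toEuclideanCLM (𝕜 := ℝ) G‖ ≤ 1) (h0 : 0 ≤ 1 - s * lam0) :
    ‖1 - s • toEuclideanCLM (𝕜 := ℝ) G‖ ≤ 1 - s * lam0 := by
  set T := toEuclideanCLM (𝕜 := ℝ) G with hT
  set v := hH.eigenvectorBasis with hv
  set μ := hH.eigenvalues with hμ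
  have Tvi : ∀ i, T (v i) = μ i • v i := by
    intro i
    have h := hH.mulVec_eigenvectorBasis i
    show (WithLp.equiv 2 (Fin N → ℝ)).symm (G *ᵥ (WithLp.equiv 2 (Fin N → ℝ)) (v i)) = _
    rw [show (WithLp.equiv 2 (Fin N → ℝ)) (v i) = ⇑(v i) from rfl, h]
    rfl
  have hμle : ∀ i, |μ i| ≤ ‖T‖ := by
    intro i
    have h1 : ‖T (v i)‖ = |μ i| * ‖v i‖ := by rw [Tvi i, norm_smul, Real.norm_eq_abs]
    have h2 : ‖v i‖ = 1 := v.orthonormal.1 i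
    have := T.le_opNorm (v i)
    rw [h1, h2] at this
    linarith
  have habs : ∀ i, |1 - s * μ i| ≤ 1 - s * lam0 := by
    intro i
    rw [abs_le]
    constructor
    · have h1 : s * μ i ≤ s * ‖T‖ := by
        have := (hμle i)
        nlinarith [le_abs_self (μ i)]
      nlinarith
    · have : s * lam0 ≤ s * μ i := mul_le_mul_of_nonneg_left (hmin i) hs
      linarith
  refine ContinuousLinearMap.opNorm_le_bound _ h0 (fun x => ?_)
  have happ : (1 - s • T) x = x - s • T x := by
    simp [ContinuousLinearMap.sub_apply, ContinuousLinearMap.smul_apply]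
  rw [happ]
  set y := x - s • T x with hy
  have hrepr : ∀ i, v.repr y i = (1 - s * μ i) * v.repr x i := by
    intro i
    have hsym := (isHermitian_iff_isSymmetric.1 hH)
    have hTsym : ∀ u w : EuclideanSpace ℝ (Fin N),
        (inner ℝ (T u) w : ℝ) = inner ℝ u (T w) := fun u w => hsym u w
    rw [v.repr_apply_apply, v.repr_apply_apply, hy]
    rw [inner_sub_right, real_inner_smul_right]
    rw [← hTsym (v i) x, Tvi i, real_inner_smul_left]
    ring
  have hnorm : ‖y‖ = ‖v.repr y‖ := (v.repr.norm_map y).symm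
  have hnormx : ‖x‖ = ‖v.repr x‖ := (v.repr.norm_map x).symm
  rw [hnorm, hnormx]
  rw [EuclideanSpace.norm_eq, EuclideanSpace.norm_eq]
  have hterm : ∀ i, ‖v.repr y i‖ ^ 2 ≤ (1 - s * lam0) ^ 2 * ‖v.repr x i‖ ^ 2 := by
    intro i
    rw [hrepr i]
    rw [norm_mul]
    rw [mul_pow, Real.norm_eq_abs, ← mul_pow]
    have := habs i
    have h2 : |1 - s * μ i| * ‖v.repr x i‖ ≤ (1 - s * lam0) * ‖v.repr x i‖ :=
      mul_le_mul_of_nonneg_right this (norm_nonneg _)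
    have h3 : 0 ≤ |1 - s * μ i| * ‖v.repr x i‖ := by positivity
    calc (|1 - s * μ i| * ‖v.repr x i‖) ^ 2 ≤ ((1 - s * lam0) * ‖v.repr x i‖) ^ 2 := by
          exact pow_le_pow_left₀ h3 h2 2
      _ = (1 - s * lam0) ^ 2 * ‖v.repr x i‖ ^ 2 := by ring
  calc Real.sqrt (∑ i, ‖v.repr y i‖ ^ 2)
      ≤ Real.sqrt ((1 - s * lam0) ^ 2 * ∑ i, ‖v.repr x i‖ ^ 2) := by
        apply Real.sqrt_le_sqrt
        rw [Finset.mul_sum]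
        exact Finset.sum_le_sum (fun i _ => hterm i)
    _ = (1 - s * lam0) * Real.sqrt (∑ i, ‖v.repr x i‖ ^ 2) := by
        rw [Real.sqrt_mul (by positivity), Real.sqrt_sq h0]

set_option maxHeartbeats 1000000 in
/-- **One-epoch contraction for mini-batch SGD.** If `G` is symmetric positive definite with
smallest eigenvalue `λ₀ > 0` and `B₁, …, B_E` are disjoint batches covering `{1, …, N}`,
then for all sufficiently small `η > 0` the one-epoch ordered product satisfies
`‖Π_{z=E}^{1}(I − (η/b) G P_{B_z})‖_op ≤ 1 − (η/(2b)) λ₀ < 1`. -/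
theorem epoch_contraction {N E : ℕ} (G : Matrix (Fin N) (Fin N) ℝ)
    (hG : G.PosDef) (lam0 : ℝ) (hlam_pos : 0 < lam0)
    (hlam_eig : ∃ v : Fin N → ℝ, v ≠ 0 ∧ G.mulVec v = lam0 • v)
    (hlam_min : ∀ (μ : ℝ) (v : Fin N → ℝ), v ≠ 0 → G.mulVec v = μ • v → lam0 ≤ μ)
    (B : Fin E → Finset (Fin N))
    (hdisj : ∀ i j, i ≠ j → Disjoint (B i) (B j))
    (hcover : ∀ x : Fin N, ∃ i, x ∈ B i)
    (b : ℝ) (hb : 0 < b) :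
    ∃ η₀ > 0, ∀ η : ℝ, 0 < η → η < η₀ →
      l2OpNorm
          ((List.ofFn fun z : Fin E =>
            (1 : Matrix (Fin N) (Fin N) ℝ) - (η / b) • (G * batchProj (B z))).reverse.prod)
        ≤ 1 - η / (2 * b) * lam0 ∧
      1 - η / (2 * b) * lam0 < 1 := by
  have hH : G.IsHermitian := hG.1
  set T := toEuclideanCLM (𝕜 := ℝ) G with hTdef
  -- lam0 is at most the operator norm of T
  have hlamT : lam0 ≤ ‖T‖ := by
    obtain ⟨w, hw, hweq⟩ := hlam_eig
    set x : EuclideanSpace ℝ (Fin N) := (WithLp.equiv 2 (Fin N → ℝ)).symm w with hx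
    have hx0 : x ≠ 0 := by
      intro h
      apply hw
      have := congrArg (WithLp.equiv 2 (Fin N → ℝ)) h
      simpa [hx] using this
    have hTx : T x = lam0 • x := by
      show (WithLp.equiv 2 (Fin N → ℝ)).symm (G *ᵥ (WithLp.equiv 2 (Fin N → ℝ)) x) = _
      rw [show (WithLp.equiv 2 (Fin N → ℝ)) x = w from rfl, hweq]
      rfl
    have h1 : ‖T x‖ = lam0 * ‖x‖ := by
      rw [hTx, norm_smul, Real.norm_eq_abs, abs_of_pos hlam_pos]
    have h2 := T.le_opNorm x
    rw [h1] at h2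
    have hxn : 0 < ‖x‖ := norm_pos_iff.mpr hx0
    exact le_of_mul_le_mul_right h2 hxn
  -- all eigenvalues of G are at least lam0
  have hmin : ∀ i, lam0 ≤ hH.eigenvalues i := by
    intro i
    apply hlam_min (hH.eigenvalues i) (hH.eigenvectorBasis i)
    · intro h
      apply hH.eigenvectorBasis.orthonormal.ne_zero i
      ext k
      exact congrFun h k
    · exact hH.mulVec_eigenvectorBasis i
  -- the projectors sum to 1, so the G * P_z  sum to G
  have hsum : ∑ z : Fin E, G * batchProj (B z) = G := by
    rw [← Finset.mul_sum, batchProj_sum B hdisj hcover, mul_one]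
  -- the expansion constant
  set L : List (EuclideanSpace ℝ (Fin N) →L[ℝ] EuclideanSpace ℝ (Fin N)) :=
    (List.ofFn fun z : Fin E => toEuclideanCLM (𝕜 := ℝ) (G * batchProj (B z))).reverse with hL
  obtain ⟨C, hC0, hC⟩ := epoch_expand L
  have hLsum : L.sum = T := by
    rw [hL, List.sum_reverse, List.sum_ofFn, ← map_sum, hsum]
  -- choose η₀
  have hTn : (0:ℝ) ≤ ‖T‖ := norm_nonneg _
  have hT1 : (0:ℝ) < ‖T‖ + 1 := by linarith
  have hC1 : (0:ℝ) < C + 1 := by linarith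
  refine ⟨min (b / (‖T‖ + 1)) (b * lam0 / (2 * (C + 1))),
    lt_min (div_pos hb hT1) (div_pos (by positivity) (by linarith)), fun η hη hη' => ?_⟩
  set t := η / b with ht
  have ht0 : 0 < t := div_pos hη hb
  have htT : t * (‖T‖ + 1) < 1 := by
    have h1 : η < b / (‖T‖ + 1) := lt_of_lt_of_le hη' (min_le_left _ _)
    rw [ht, div_mul_eq_mul_div, div_lt_one hb]
    calc η * (‖T‖ + 1) < b / (‖T‖ + 1) * (‖T‖ + 1) :=
          mul_lt_mul_of_pos_right h1 hT1
      _ = b := div_mul_cancel₀ b hT1.ne'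
  have htT1 : t * ‖T‖ ≤ 1 := by nlinarith
  have ht1 : t < 1 := by nlinarith
  have htC : t * C ≤ lam0 / 2 := by
    have h1 : η < b * lam0 / (2 * (C + 1)) := lt_of_lt_of_le hη' (min_le_right _ _)
    have h2 : t * (2 * (C + 1)) < lam0 := by
      rw [ht, div_mul_eq_mul_div, div_lt_iff₀ hb]
      calc η * (2 * (C + 1)) < b * lam0 / (2 * (C + 1)) * (2 * (C + 1)) :=
            mul_lt_mul_of_pos_right h1 (by linarith)
        _ = lam0 * b := by rw [div_mul_cancel₀ _ (by positivity : (0:ℝ) < 2 * (C + 1)).ne']; ring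
    nlinarith
  have h0lam : 0 ≤ 1 - t * lam0 := by
    have := mul_le_mul_of_nonneg_left hlamT ht0.le
    linarith
  have habs_t : |t| ≤ 1 := by rw [abs_of_pos ht0]; exact ht1.le
  obtain ⟨S, hS, hSC⟩ := hC t habs_t
  rw [hLsum] at hS
  have hmap : toEuclideanCLM (𝕜 := ℝ)
      ((List.ofFn fun z : Fin E =>
        (1 : Matrix (Fin N) (Fin N) ℝ) - t • (G * batchProj (B z))).reverse.prod)
      = (L.map (fun A => 1 - t • A)).prod := by
    rw [map_list_prod]
    congr 1
    rw [hL, List.map_reverse, List.map_reverse, List.map_ofFn, List.map_ofFn]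
    exact congrArg _ (congrArg List.ofFn (funext fun z => by
      show toEuclideanCLM (𝕜 := ℝ) (1 - t • (G * batchProj (B z))) = _
      rw [map_sub, _root_.map_one, _root_.map_smul]
      rfl))
  have hhalf : η / (2 * b) = t / 2 := by rw [ht]; ring
  constructor
  · have hb1 : ‖1 - t • T‖ ≤ 1 - t * lam0 :=
      spectral_bound G hH lam0 hmin t ht0.le htT1 h0lam
    calc l2OpNorm ((List.ofFn fun z : Fin E =>
            (1 : Matrix (Fin N) (Fin N) ℝ) - t • (G * batchProj (B z))).reverse.prod)
        = ‖(L.map (fun A => 1 - t • A)).prod‖ := by rw [l2OpNorm, hmap]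
      _ = ‖1 - t • T + t ^ 2 • S‖ := by rw [hS]
      _ ≤ ‖1 - t • T‖ + ‖t ^ 2 • S‖ := norm_add_le _ _
      _ ≤ (1 - t * lam0) + t ^ 2 * C := by
          have hb2 : ‖t ^ 2 • S‖ = t ^ 2 * ‖S‖ := by
            rw [norm_smul (t ^ 2) S, Real.norm_eq_abs,
              abs_of_nonneg (by positivity : (0:ℝ) ≤ t ^ 2)]
          have hb3 : t ^ 2 * ‖S‖ ≤ t ^ 2 * C :=
            mul_le_mul_of_nonneg_left hSC (by positivity)
          rw [hb2]
          linarith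
      _ ≤ 1 - η / (2 * b) * lam0 := by
          rw [hhalf]
          nlinarith [mul_le_mul_of_nonneg_left htC ht0.le]
  · have : 0 < η / (2 * b) * lam0 := by positivity
    linarith
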